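/- (Global Theorem) Let 𝒫 ⊂ ℝ³ be a finite pointsymmetric set with ‖P‖ ≤ 1 for all P ∈ 𝒫 (radius 1) and let S ∈ 𝒫. Let ε > 0, let θ̄1, φ̄1, θ̄2, φ̄2, ᾱ ∈ ℝ, and let w ∈ ℝ² be a unit vector. Write M̄1 = M(θ̄1,φ̄1), M̄2 = M(θ̄2,φ̄2), M̄1^θ = M^θ(θ̄1,φ̄1), M̄1^φ = M^φ(θ̄1,φ̄1), and analogously M̄2^θ, M̄2^φ. Set G = ⟨R(ᾱ)M̄1 S, w⟩ − ε·(|⟨R'(ᾱ)M̄1 S, w⟩| + |⟨R(ᾱ)M̄1^θ S, w⟩| + |⟨R(ᾱ)M̄1^φ S, w⟩|) − (9/2)ε², and for each P ∈ 𝒫 set H_P = ⟨M̄2 P, w⟩ + ε·(|⟨M̄2^θ P, w⟩| + |⟨M̄2^φ P, w⟩|) + 2ε². If G > max_{P ∈ 𝒫} H_P, then there exist no θ1, φ1, θ2, φ2, α with |θ1 − θ̄1| ≤ ε, |φ1 − φ̄1| ≤ ε, |θ2 − θ̄2| ≤ ε, |φ2 − φ̄2| ≤ ε, |α − ᾱ|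 ≤ ε such that R(α)·M(θ1,φ1)·𝒫 is contained in the interior of the convex hull of M(θ2,φ2)·𝒫. -/

import Mathlib

noncomputable section

open Real

/-- A matrix acting on Euclidean space. -/
def act {m n : ℕ} (A : Matrix (Fin m) (Fin n) ℝ) (v : EuclideanSpace ℝ (Fin n)) :
    EuclideanSpace ℝ (Fin m) :=
  Matrix.toEuclideanLin A v

/-- Operator norm of a real matrix with respect to the Euclidean norms. -/
def opNorm {m n : ℕ} (A : Matrix (Fin m) (Fin n) ℝ) : ℝ :=
  ‖LinearMap.toContinuousLinearMap (Matrix.toEuclideanLin A)‖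

/-- The 2×2 rotation matrix by angle `α`. -/
def R (α : ℝ) : Matrix (Fin 2) (Fin 2) ℝ :=
  !![cos α, -sin α; sin α, cos α]

/-- The orthogonal projection matrix in direction `X θ φ`. -/
def M (θ φ : ℝ) : Matrix (Fin 2) (Fin 3) ℝ :=
  !![-sin θ, cos θ, 0; -cos θ * cos φ, -sin θ * cos φ, sin φ]

/-- The unit vector parametrized by spherical coordinates. -/
def X (θ φ : ℝ) : EuclideanSpace ℝ (Fin 3) :=
  (WithLp.equiv 2 (Fin 3 → ℝ)).symm ![cos θ * sin φ, sin θ * sin φ, cos φ]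

/-- Rotation about the x-axis. -/
def Rx (α : ℝ) : Matrix (Fin 3) (Fin 3) ℝ :=
  !![1, 0, 0; 0, cos α, -sin α; 0, sin α, cos α]

/-- Rotation about the y-axis. -/
def Ry (α : ℝ) : Matrix (Fin 3) (Fin 3) ℝ :=
  !![cos α, 0, -sin α; 0, 1, 0; sin α, 0, cos α]

/-- Rotation about the z-axis. -/
def Rz (α : ℝ) : Matrix (Fin 3) (Fin 3) ℝ :=
  !![cos α, -sin α, 0; sin α, cos α, 0; 0, 0, 1]

/-- Entrywise derivative of the projection matrix with respect to θ. -/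
def Mθ (θ φ : ℝ) : Matrix (Fin 2) (Fin 3) ℝ :=
  !![-cos θ, -sin θ, 0; sin θ * cos φ, -cos θ * cos φ, 0]

/-- Entrywise derivative of the projection matrix with respect to φ. -/
def Mφ (θ φ : ℝ) : Matrix (Fin 2) (Fin 3) ℝ :=
  !![0, 0, 0; cos θ * sin φ, sin θ * sin φ, cos φ]

/-- Derivative of the 2×2 rotation matrix. -/
def R' (α : ℝ) : Matrix (Fin 2) (Fin 2) ℝ :=
  !![-sin α, -cos α; cos α, -sin α]

open scoped RealInnerProductSpace

/-! ### Auxiliary scalar lemmas -/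

lemma cs2 (a b c d : ℝ) (h1 : a^2+b^2 ≤ 1) (h2 : c^2+d^2 ≤ 1) : |a*c+b*d| ≤ 1 := by
  rw [abs_le]
  constructor <;> nlinarith [sq_nonneg (a+c), sq_nonneg (b+d), sq_nonneg (a-c), sq_nonneg (b-d)]

lemma abs_add6 (t1 t2 t3 t4 t5 t6 : ℝ) :
    |t1+t2+t3+t4+t5+t6| ≤ |t1|+|t2|+|t3|+|t4|+|t5|+|t6| := by
  have a1 := abs_add_le (t1+t2+t3+t4+t5) t6
  have a2 := abs_add_le (t1+t2+t3+t4) t5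
  have a3 := abs_add_le (t1+t2+t3) t4
  have a4 := abs_add_le (t1+t2) t3
  have a5 := abs_add_le t1 t2
  linarith

lemma quad_bound (g g' g'' : ℝ → ℝ) (C : ℝ)
    (h1 : ∀ t, HasDerivAt g (g' t) t) (h2 : ∀ t, HasDerivAt g' (g'' t) t)
    (hC : ∀ t, |g'' t| ≤ C) : |g 1 - g 0 - g' 0| ≤ C/2 := by
  have hstep : ∀ t ∈ Set.Icc (0:ℝ) 1, |g' t - g' 0| ≤ C * t := by
    intro t ht
    have := Convex.norm_image_sub_le_of_norm_hasDerivWithin_le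
      (f := g') (f' := g'') (s := Set.Icc (0:ℝ) 1) (C := C)
      (fun x _ => (h2 x).hasDerivWithinAt) (fun x _ => hC x) (convex_Icc 0 1)
      (Set.mem_Icc.2 ⟨le_refl 0, zero_le_one⟩) ht
    simpa [Real.norm_eq_abs, abs_of_nonneg ht.1] using this
  have main : ∀ (σ : ℝ), σ = 1 ∨ σ = -1 →
      σ * (g 1 - g 0 - g' 0) ≤ C/2 := by
    intro σ hσ
    set u : ℝ → ℝ := fun t => C*t^2/2 - σ * (g t - g 0 - t * g' 0) with hu
    have hderiv : ∀ t, HasDerivAt u (C*t - σ * (g' t - g' 0)) t := by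
      intro t
      have h3 : HasDerivAt (fun t : ℝ => C*t^2/2) (C*t) t := by
        have := ((hasDerivAt_pow 2 t).const_mul C).div_const 2
        convert this using 1
        · rfl
        · rfl
        ring
      have h4 : HasDerivAt (fun t => g t - g 0 - t * g' 0) (g' t - g' 0) t :=
        ((h1 t).sub_const (g 0)).sub (by simpa using (hasDerivAt_id t).mul_const (g' 0))
      exact h3.sub (h4.const_mul σ)
    have hmono : MonotoneOn u (Set.Icc (0:ℝ) 1) := by
      apply monotoneOn_of_deriv_nonneg (convex_Icc 0 1)
        (fun t _ => (hderiv t).continuousAt.continuousWithinAt)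
        (fun t _ => (hderiv t).differentiableAt.differentiableWithinAt)
      intro t ht
      rw [interior_Icc] at ht
      rw [(hderiv t).deriv]
      have h5 := hstep t ⟨le_of_lt ht.1, le_of_lt ht.2⟩
      have h6 : |σ * (g' t - g' 0)| ≤ C * t := by
        have : |σ| = 1 := by rcases hσ with h | h <;> simp [h]
        rw [abs_mul, this, one_mul]; exact h5
      nlinarith [abs_nonneg (σ * (g' t - g' 0)), le_abs_self (σ * (g' t - g' 0))]
    have := hmono (Set.mem_Icc.2 ⟨le_refl 0, zero_le_one⟩)
      (Set.mem_Icc.2 ⟨zero_le_one, le_refl 1⟩) zero_le_one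
    simp only [hu] at this
    nlinarith [this]
  rw [abs_le]
  constructor
  · have := main (-1) (Or.inr rfl); linarith
  · have := main 1 (Or.inl rfl); linarith

/-! ### The scalar model of the projection functions -/

/-- Scalar form of `⟪R β (M θ φ v), w⟫`. -/
def FF (s0 s1 s2 w0 w1 θ φ β : ℝ) : ℝ :=
  (-sin θ * s0 + cos θ * s1) * (w0 * cos β + w1 * sin β)
  + (-cos θ * cos φ * s0 - sin θ * cos φ * s1 + sin φ * s2) * (-w0 * sin β + w1 * cos β)

/-- Scalar form of `⟪R β (Mθ θ φ v), w⟫`. -/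
def GTθ (s0 s1 _s2 w0 w1 θ φ β : ℝ) : ℝ :=
  (-cos θ * s0 - sin θ * s1) * (w0 * cos β + w1 * sin β)
  + (sin θ * cos φ * s0 - cos θ * cos φ * s1) * (-w0 * sin β + w1 * cos β)

/-- Scalar form of `⟪R β (Mφ θ φ v), w⟫`. -/
def GTφ (s0 s1 s2 w0 w1 θ φ β : ℝ) : ℝ :=
  (cos θ * sin φ * s0 + sin θ * sin φ * s1 + cos φ * s2) * (-w0 * sin β + w1 * cos β)

/-- Scalar form of `⟪R' β (M θ φ v), w⟫`. -/
def GTα (s0 s1 s2 w0 w1 θ φ β : ℝ) : ℝ :=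
  (-sin θ * s0 + cos θ * s1) * (-w0 * sin β + w1 * cos β)
  - (-cos θ * cos φ * s0 - sin θ * cos φ * s1 + sin φ * s2) * (w0 * cos β + w1 * sin β)

/-- Second derivative of `t ↦ FF … (θb+t*x) (φb+t*y) (αb+t*a)`. -/
def GPP (s0 s1 s2 w0 w1 x y a θ φ β : ℝ) : ℝ :=
  x^2 * ((sin θ*s0 - cos θ*s1) * (w0*cos β + w1*sin β)
          + (cos θ*cos φ*s0 + sin θ*cos φ*s1) * (-w0*sin β + w1*cos β))
  + y^2 * ((cos θ*cos φ*s0 + sin θ*cos φ*s1 - sin φ*s2) * (-w0*sin β + w1*cos β))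
  + a^2 * (-((-sin θ*s0 + cos θ*s1) * (w0*cos β + w1*sin β)
          + (-cos θ*cos φ*s0 - sin θ*cos φ*s1 + sin φ*s2) * (-w0*sin β + w1*cos β)))
  + 2*x*y * ((-sin θ*sin φ*s0 + cos θ*sin φ*s1) * (-w0*sin β + w1*cos β))
  + 2*x*a * ((-cos θ*s0 - sin θ*s1) * (-w0*sin β + w1*cos β)
          - (sin θ*cos φ*s0 - cos θ*cos φ*s1) * (w0*cos β + w1*sin β))
  + 2*y*a * (-((cos θ*sin φ*s0 + sin θ*sin φ*s1 + cos φ*s2) * (w0*cos β + w1*sin β)))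

section deriv
variable (s0 s1 s2 w0 w1 θb φb αb x y a : ℝ)

lemma hasDerivAt_FF (t : ℝ) :
    HasDerivAt (fun t => FF s0 s1 s2 w0 w1 (θb+t*x) (φb+t*y) (αb+t*a))
      (x * GTθ s0 s1 s2 w0 w1 (θb+t*x) (φb+t*y) (αb+t*a)
        + y * GTφ s0 s1 s2 w0 w1 (θb+t*x) (φb+t*y) (αb+t*a)
        + a * GTα s0 s1 s2 w0 w1 (θb+t*x) (φb+t*y) (αb+t*a)) t := by
  have hθ : HasDerivAt (fun t : ℝ => θb + t*x) x t := by
    simpa using ((hasDerivAt_id t).mul_const x).const_add θb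
  have hφ : HasDerivAt (fun t : ℝ => φb + t*y) y t := by
    simpa using ((hasDerivAt_id t).mul_const y).const_add φb
  have hβ : HasDerivAt (fun t : ℝ => αb + t*a) a t := by
    simpa using ((hasDerivAt_id t).mul_const a).const_add αb
  have hsθ := hθ.sin; have hcθ := hθ.cos
  have hsφ := hφ.sin; have hcφ := hφ.cos
  have hsβ := hβ.sin; have hcβ := hβ.cos
  have W0c := (hcβ.const_mul w0).add (hsβ.const_mul w1)
  have W1c := (hsβ.const_mul (-w0)).add (hcβ.const_mul w1)
  have pc := (hsθ.neg.mul_const s0).add (hcθ.mul_const s1)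
  have qc := (((hcθ.neg.mul hcφ).mul_const s0).sub ((hsθ.mul hcφ).mul_const s1)).add
    (hsφ.mul_const s2)
  have H := (pc.mul W0c).add (qc.mul W1c)
  unfold FF GTθ GTφ GTα
  exact H.congr_deriv (by simp only [Pi.add_apply, Pi.sub_apply, Pi.mul_apply, Pi.neg_apply]; ring)

lemma hasDerivAt_FF' (t : ℝ) :
    HasDerivAt (fun t => x * GTθ s0 s1 s2 w0 w1 (θb+t*x) (φb+t*y) (αb+t*a)
        + y * GTφ s0 s1 s2 w0 w1 (θb+t*x) (φb+t*y) (αb+t*a)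
        + a * GTα s0 s1 s2 w0 w1 (θb+t*x) (φb+t*y) (αb+t*a))
      (GPP s0 s1 s2 w0 w1 x y a (θb+t*x) (φb+t*y) (αb+t*a)) t := by
  have hθ : HasDerivAt (fun t : ℝ => θb + t*x) x t := by
    simpa using ((hasDerivAt_id t).mul_const x).const_add θb
  have hφ : HasDerivAt (fun t : ℝ => φb + t*y) y t := by
    simpa using ((hasDerivAt_id t).mul_const y).const_add φb
  have hβ : HasDerivAt (fun t : ℝ => αb + t*a) a t := by
    simpa using ((hasDerivAt_id t).mul_const a).const_add αb
  have hsθ := hθ.sin; have hcθ := hθ.cos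
  have hsφ := hφ.sin; have hcφ := hφ.cos
  have hsβ := hβ.sin; have hcβ := hβ.cos
  have W0c := (hcβ.const_mul w0).add (hsβ.const_mul w1)
  have W1c := (hsβ.const_mul (-w0)).add (hcβ.const_mul w1)
  have pc := (hsθ.neg.mul_const s0).add (hcθ.mul_const s1)
  have qc := (((hcθ.neg.mul hcφ).mul_const s0).sub ((hsθ.mul hcφ).mul_const s1)).add
    (hsφ.mul_const s2)
  have pθc := (hcθ.neg.mul_const s0).sub (hsθ.mul_const s1)
  have qθc := ((hsθ.mul hcφ).mul_const s0).sub ((hcθ.mul hcφ).mul_const s1)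
  have qφc := (((hcθ.mul hsφ).mul_const s0).add ((hsθ.mul hsφ).mul_const s1)).add
    (hcφ.mul_const s2)
  have H1 := ((pθc.mul W0c).add (qθc.mul W1c)).const_mul x
  have H2 := ((qφc.mul W1c)).const_mul y
  have H3 := ((pc.mul W1c).sub (qc.mul W0c)).const_mul a
  have H := (H1.add H2).add H3
  unfold GTθ GTφ GTα GPP
  exact H.congr_deriv (by simp only [Pi.add_apply, Pi.sub_apply, Pi.mul_apply, Pi.neg_apply]; ring)
end deriv

set_option maxHeartbeats 1000000 in
lemma GPP_bound (s0 s1 s2 w0 w1 x y a θ φ β : ℝ)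
    (hs : s0^2+s1^2+s2^2 ≤ 1) (hw : w0^2+w1^2 ≤ 1) :
    |GPP s0 s1 s2 w0 w1 x y a θ φ β| ≤ (|x|+|y|+|a|)^2 := by
  have idθ := sin_sq_add_cos_sq θ
  have idφ := sin_sq_add_cos_sq φ
  have idβ := sin_sq_add_cos_sq β
  have hW : (w0*cos β + w1*sin β)^2 + (-w0*sin β + w1*cos β)^2 ≤ 1 := by
    nlinarith [idβ]
  have idp : (-sin θ*s0 + cos θ*s1)^2 + (cos θ*s0 + sin θ*s1)^2 = s0^2 + s1^2 := by
    linear_combination (s0^2+s1^2) * idθ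
  have idrot : ∀ u v : ℝ, (cos φ*u - sin φ*v)^2 + (sin φ*u + cos φ*v)^2 = u^2 + v^2 := by
    intro u v; linear_combination (u^2+v^2) * idφ
  have hq1 := idrot (cos θ*s0 + sin θ*s1) s2
  have hq2 := idrot (-sin θ*s0 + cos θ*s1) 0
  unfold GPP
  set W0 := w0*cos β + w1*sin β with hW0
  set W1 := -w0*sin β + w1*cos β with hW1
  have hA : |(sin θ*s0 - cos θ*s1) * W0 + (cos θ*cos φ*s0 + sin θ*cos φ*s1) * W1| ≤ 1 := by
    refine cs2 _ _ _ _ ?_ hW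
    nlinarith [idp, hq1, sq_nonneg (sin φ*(cos θ*s0 + sin θ*s1) + cos φ*s2), sq_nonneg s2,
      sq_nonneg (sin φ*(cos θ*s0 + sin θ*s1)), sq_nonneg (cos φ*s2)]
  have hB : |(cos θ*cos φ*s0 + sin θ*cos φ*s1 - sin φ*s2) * W1| ≤ 1 := by
    rw [show (cos θ*cos φ*s0 + sin θ*cos φ*s1 - sin φ*s2) * W1
      = 0 * W0 + (cos θ*cos φ*s0 + sin θ*cos φ*s1 - sin φ*s2) * W1 by ring]
    refine cs2 _ _ _ _ ?_ hW
    nlinarith [idp, hq1, sq_nonneg (sin φ*(cos θ*s0 + sin θ*s1) + cos φ*s2),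
      sq_nonneg (-sin θ*s0 + cos θ*s1)]
  have hC : |(-((-sin θ*s0 + cos θ*s1) * W0
      + (-cos θ*cos φ*s0 - sin θ*cos φ*s1 + sin φ*s2) * W1))| ≤ 1 := by
    rw [show -((-sin θ*s0 + cos θ*s1) * W0
        + (-cos θ*cos φ*s0 - sin θ*cos φ*s1 + sin φ*s2) * W1)
      = (sin θ*s0 - cos θ*s1) * W0
        + (cos θ*cos φ*s0 + sin θ*cos φ*s1 - sin φ*s2) * W1 by ring]
    refine cs2 _ _ _ _ ?_ hW
    nlinarith [idp, hq1, sq_nonneg (sin φ*(cos θ*s0 + sin θ*s1) + cos φ*s2)]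
  have hD : |(-sin θ*sin φ*s0 + cos θ*sin φ*s1) * W1| ≤ 1 := by
    rw [show (-sin θ*sin φ*s0 + cos θ*sin φ*s1) * W1
      = 0 * W0 + (-sin θ*sin φ*s0 + cos θ*sin φ*s1) * W1 by ring]
    refine cs2 _ _ _ _ ?_ hW
    nlinarith [idp, hq2, sq_nonneg (cos φ*(-sin θ*s0 + cos θ*s1)), sq_nonneg s2,
      sq_nonneg (cos θ*s0 + sin θ*s1)]
  have hE : |(-cos θ*s0 - sin θ*s1) * W1 - (sin θ*cos φ*s0 - cos θ*cos φ*s1) * W0| ≤ 1 := by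
    rw [show (-cos θ*s0 - sin θ*s1) * W1 - (sin θ*cos φ*s0 - cos θ*cos φ*s1) * W0
      = (-(sin θ*cos φ*s0 - cos θ*cos φ*s1)) * W0 + (-cos θ*s0 - sin θ*s1) * W1 by ring]
    refine cs2 _ _ _ _ ?_ hW
    nlinarith [idp, hq2, sq_nonneg (sin φ*(-sin θ*s0 + cos θ*s1)), sq_nonneg s2]
  have hG : |(-((cos θ*sin φ*s0 + sin θ*sin φ*s1 + cos φ*s2) * W0))| ≤ 1 := by
    rw [show -((cos θ*sin φ*s0 + sin θ*sin φ*s1 + cos φ*s2) * W0)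
      = (-(cos θ*sin φ*s0 + sin θ*sin φ*s1 + cos φ*s2)) * W0 + 0 * W1 by ring]
    refine cs2 _ _ _ _ ?_ hW
    nlinarith [idp, hq1, sq_nonneg (cos φ*(cos θ*s0 + sin θ*s1) - sin φ*s2),
      sq_nonneg (-sin θ*s0 + cos θ*s1)]
  set A := (sin θ*s0 - cos θ*s1) * W0 + (cos θ*cos φ*s0 + sin θ*cos φ*s1) * W1 with hA'
  set B := (cos θ*cos φ*s0 + sin θ*cos φ*s1 - sin φ*s2) * W1 with hB'
  set C := -((-sin θ*s0 + cos θ*s1) * W0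
      + (-cos θ*cos φ*s0 - sin θ*cos φ*s1 + sin φ*s2) * W1) with hC'
  set D := (-sin θ*sin φ*s0 + cos θ*sin φ*s1) * W1 with hD'
  set E := (-cos θ*s0 - sin θ*s1) * W1 - (sin θ*cos φ*s0 - cos θ*cos φ*s1) * W0 with hE'
  set G := -((cos θ*sin φ*s0 + sin θ*sin φ*s1 + cos φ*s2) * W0) with hG'
  have step := abs_add6 (x^2*A) (y^2*B) (a^2*C) (2*x*y*D) (2*x*a*E) (2*y*a*G)
  refine le_trans step ?_
  have e1 : |x^2*A| ≤ x^2 := by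
    rw [abs_mul, abs_of_nonneg (sq_nonneg x)]
    exact mul_le_of_le_one_right (sq_nonneg x) hA
  have e2 : |y^2*B| ≤ y^2 := by
    rw [abs_mul, abs_of_nonneg (sq_nonneg y)]
    exact mul_le_of_le_one_right (sq_nonneg y) hB
  have e3 : |a^2*C| ≤ a^2 := by
    rw [abs_mul, abs_of_nonneg (sq_nonneg a)]
    exact mul_le_of_le_one_right (sq_nonneg a) hC
  have e4 : |2*x*y*D| ≤ 2 * |x| * |y| := by
    rw [abs_mul, abs_mul, abs_mul, abs_two]
    exact mul_le_of_le_one_right (by positivity) hD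
  have e5 : |2*x*a*E| ≤ 2 * |x| * |a| := by
    rw [abs_mul, abs_mul, abs_mul, abs_two]
    exact mul_le_of_le_one_right (by positivity) hE
  have e6 : |2*y*a*G| ≤ 2 * |y| * |a| := by
    rw [abs_mul, abs_mul, abs_mul, abs_two]
    exact mul_le_of_le_one_right (by positivity) hG
  have final : x^2 + y^2 + a^2 + 2 * |x| * |y| + 2 * |x| * |a| + 2 * |y| * |a|
      = (|x|+|y|+|a|)^2 := by
    rw [← sq_abs x, ← sq_abs y, ← sq_abs a]; ring
  linarith

/-- The key Taylor estimate for the scalar model. -/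
lemma key (s0 s1 s2 w0 w1 θb φb αb x y a : ℝ)
    (hs : s0^2+s1^2+s2^2 ≤ 1) (hw : w0^2+w1^2 ≤ 1) :
    |FF s0 s1 s2 w0 w1 (θb+x) (φb+y) (αb+a) - FF s0 s1 s2 w0 w1 θb φb αb
      - (x * GTθ s0 s1 s2 w0 w1 θb φb αb + y * GTφ s0 s1 s2 w0 w1 θb φb αb
         + a * GTα s0 s1 s2 w0 w1 θb φb αb)| ≤ (|x|+|y|+|a|)^2/2 := by
  have main := quad_bound
    (fun t => FF s0 s1 s2 w0 w1 (θb+t*x) (φb+t*y) (αb+t*a))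
    (fun t => x * GTθ s0 s1 s2 w0 w1 (θb+t*x) (φb+t*y) (αb+t*a)
        + y * GTφ s0 s1 s2 w0 w1 (θb+t*x) (φb+t*y) (αb+t*a)
        + a * GTα s0 s1 s2 w0 w1 (θb+t*x) (φb+t*y) (αb+t*a))
    (fun t => GPP s0 s1 s2 w0 w1 x y a (θb+t*x) (φb+t*y) (αb+t*a))
    ((|x|+|y|+|a|)^2)
    (fun t => hasDerivAt_FF s0 s1 s2 w0 w1 θb φb αb x y a t)
    (fun t => hasDerivAt_FF' s0 s1 s2 w0 w1 θb φb αb x y a t)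
    (fun t => GPP_bound s0 s1 s2 w0 w1 x y a _ _ _ hs hw)
  norm_num at main
  exact main

/-! ### Interface lemmas -/

lemma inner_RM (θ φ β : ℝ) (v : EuclideanSpace ℝ (Fin 3)) (w : EuclideanSpace ℝ (Fin 2)) :
    ⟪act (R β) (act (M θ φ) v), w⟫ = FF (v 0) (v 1) (v 2) (w 0) (w 1) θ φ β := by
  simp [act, R, M, FF, Matrix.toEuclideanLin_apply, PiLp.inner_apply, Matrix.mulVec,
    dotProduct, Fin.sum_univ_succ]
  ring

lemma inner_RMθ (θ φ β : ℝ) (v : EuclideanSpace ℝ (Fin 3)) (w : EuclideanSpace ℝ (Fin 2)) :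
    ⟪act (R β) (act (Mθ θ φ) v), w⟫ = GTθ (v 0) (v 1) (v 2) (w 0) (w 1) θ φ β := by
  simp [act, R, Mθ, GTθ, Matrix.toEuclideanLin_apply, PiLp.inner_apply, Matrix.mulVec,
    dotProduct, Fin.sum_univ_succ]
  ring

lemma inner_RMφ (θ φ β : ℝ) (v : EuclideanSpace ℝ (Fin 3)) (w : EuclideanSpace ℝ (Fin 2)) :
    ⟪act (R β) (act (Mφ θ φ) v), w⟫ = GTφ (v 0) (v 1) (v 2) (w 0) (w 1) θ φ β := by
  simp [act, R, Mφ, GTφ, Matrix.toEuclideanLin_apply, PiLp.inner_apply, Matrix.mulVec,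
    dotProduct, Fin.sum_univ_succ]
  ring

lemma inner_R'M (θ φ β : ℝ) (v : EuclideanSpace ℝ (Fin 3)) (w : EuclideanSpace ℝ (Fin 2)) :
    ⟪act (R' β) (act (M θ φ) v), w⟫ = GTα (v 0) (v 1) (v 2) (w 0) (w 1) θ φ β := by
  simp [act, R', M, GTα, Matrix.toEuclideanLin_apply, PiLp.inner_apply, Matrix.mulVec,
    dotProduct, Fin.sum_univ_succ]
  ring

lemma inner_M (θ φ : ℝ) (v : EuclideanSpace ℝ (Fin 3)) (w : EuclideanSpace ℝ (Fin 2)) :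
    ⟪act (M θ φ) v, w⟫ = FF (v 0) (v 1) (v 2) (w 0) (w 1) θ φ 0 := by
  simp [act, M, FF, Matrix.toEuclideanLin_apply, PiLp.inner_apply, Matrix.mulVec,
    dotProduct, Fin.sum_univ_succ]
  ring_nf

lemma inner_Mθ (θ φ : ℝ) (v : EuclideanSpace ℝ (Fin 3)) (w : EuclideanSpace ℝ (Fin 2)) :
    ⟪act (Mθ θ φ) v, w⟫ = GTθ (v 0) (v 1) (v 2) (w 0) (w 1) θ φ 0 := by
  simp [act, Mθ, GTθ, Matrix.toEuclideanLin_apply, PiLp.inner_apply, Matrix.mulVec,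
    dotProduct, Fin.sum_univ_succ]
  ring

lemma inner_Mφ (θ φ : ℝ) (v : EuclideanSpace ℝ (Fin 3)) (w : EuclideanSpace ℝ (Fin 2)) :
    ⟪act (Mφ θ φ) v, w⟫ = GTφ (v 0) (v 1) (v 2) (w 0) (w 1) θ φ 0 := by
  simp [act, Mφ, GTφ, Matrix.toEuclideanLin_apply, PiLp.inner_apply, Matrix.mulVec,
    dotProduct, Fin.sum_univ_succ]
  ring_nf

lemma coord3_le (P : EuclideanSpace ℝ (Fin 3)) (h : ‖P‖ ≤ 1) :
    (P 0)^2 + (P 1)^2 + (P 2)^2 ≤ 1 := by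
  have h1 : ⟪P, P⟫ = ‖P‖^2 := real_inner_self_eq_norm_sq P
  have h2 : ⟪P, P⟫ = P 0 * P 0 + P 1 * P 1 + P 2 * P 2 := by
    simp only [PiLp.inner_apply, Fin.sum_univ_three, RCLike.inner_apply, conj_trivial]
  nlinarith [norm_nonneg P]

lemma coord2_le (P : EuclideanSpace ℝ (Fin 2)) (h : ‖P‖ ≤ 1) :
    (P 0)^2 + (P 1)^2 ≤ 1 := by
  have h1 : ⟪P, P⟫ = ‖P‖^2 := real_inner_self_eq_norm_sq P
  have h2 : ⟪P, P⟫ = P 0 * P 0 + P 1 * P 1 := by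
    simp only [PiLp.inner_apply, Fin.sum_univ_two, RCLike.inner_apply, conj_trivial]
  nlinarith [norm_nonneg P]

set_option maxHeartbeats 2000000

/-- The Global Theorem: a certificate excluding solutions of Rupert's problem in a whole
ε-box around `(θ̄1, φ̄1, θ̄2, φ̄2, ᾱ)`. -/
theorem global_theorem (V : Set (EuclideanSpace ℝ (Fin 3))) (hfin : V.Finite)
    (hsym : ∀ P ∈ V, -P ∈ V) (hrad : ∀ P ∈ V, ‖P‖ ≤ 1)
    (S : EuclideanSpace ℝ (Fin 3)) (hS : S ∈ V)
    (ε θ'1 φ'1 θ'2 φ'2 α' : ℝ) (hε : 0 < ε)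
    (w : EuclideanSpace ℝ (Fin 2)) (hw : ‖w‖ = 1)
    (hGH : ∀ P ∈ V,
      ⟪act (R α') (act (M θ'1 φ'1) S), w⟫
        - ε * (|⟪act (R' α') (act (M θ'1 φ'1) S), w⟫|
          + |⟪act (R α') (act (Mθ θ'1 φ'1) S), w⟫|
          + |⟪act (R α') (act (Mφ θ'1 φ'1) S), w⟫|)
        - 9 * ε ^ 2 / 2
      > ⟪act (M θ'2 φ'2) P, w⟫
        + ε * (|⟪act (Mθ θ'2 φ'2) P, w⟫| + |⟪act (Mφ θ'2 φ'2) P, w⟫|)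
        + 2 * ε ^ 2) :
    ¬ ∃ θ1 φ1 θ2 φ2 α : ℝ,
      |θ1 - θ'1| ≤ ε ∧ |φ1 - φ'1| ≤ ε ∧ |θ2 - θ'2| ≤ ε ∧ |φ2 - φ'2| ≤ ε ∧ |α - α'| ≤ ε ∧
      act (R α) '' (act (M θ1 φ1) '' V) ⊆
        interior (convexHull ℝ (act (M θ2 φ2) '' V)) := by
  rintro ⟨θ1, φ1, θ2, φ2, α, hθ1, hφ1, hθ2, hφ2, hα, hsub⟩
  have hwc : (w 0)^2 + (w 1)^2 ≤ 1 := coord2_le w (le_of_eq hw)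
  have hSc := coord3_le S (hrad S hS)
  obtain ⟨Pm, hPmV, hPmmax⟩ := Set.exists_max_image V
    (fun P => ⟪act (M θ2 φ2) P, w⟫) hfin ⟨S, hS⟩
  have hcert := hGH Pm hPmV
  have hQmem : act (R α) (act (M θ1 φ1) S) ∈
      interior (convexHull ℝ (act (M θ2 φ2) '' V)) :=
    hsub ⟨act (M θ1 φ1) S, ⟨S, hS, rfl⟩, rfl⟩
  have hlin : IsLinearMap ℝ (fun z : EuclideanSpace ℝ (Fin 2) => ⟪z, w⟫) :=
    ⟨fun u v => inner_add_left u v w,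
     fun c u => by simpa [smul_eq_mul] using real_inner_smul_left u w c⟩
  have hhalf : convexHull ℝ (act (M θ2 φ2) '' V) ⊆
      {z : EuclideanSpace ℝ (Fin 2) | ⟪z, w⟫ ≤ ⟪act (M θ2 φ2) Pm, w⟫} := by
    apply convexHull_min
    · rintro z ⟨P, hP, rfl⟩
      exact hPmmax _ hP
    · exact convex_halfSpace_le hlin _
  have hQw : ⟪act (R α) (act (M θ1 φ1) S), w⟫ ≤ ⟪act (M θ2 φ2) Pm, w⟫ :=
    hhalf (interior_subset hQmem)
  -- Taylor estimate for the first projection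
  have k1 := key (S 0) (S 1) (S 2) (w 0) (w 1) θ'1 φ'1 α' (θ1-θ'1) (φ1-φ'1) (α-α') hSc hwc
  rw [show θ'1+(θ1-θ'1) = θ1 by ring, show φ'1+(φ1-φ'1) = φ1 by ring,
    show α'+(α-α') = α by ring] at k1
  rw [← inner_RM θ1 φ1 α S w, ← inner_RM θ'1 φ'1 α' S w, ← inner_RMθ θ'1 φ'1 α' S w,
    ← inner_RMφ θ'1 φ'1 α' S w, ← inner_R'M θ'1 φ'1 α' S w] at k1
  -- Taylor estimate for the second projection
  have hPc := coord3_le Pm (hrad Pm hPmV)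
  have k2 := key (Pm 0) (Pm 1) (Pm 2) (w 0) (w 1) θ'2 φ'2 0 (θ2-θ'2) (φ2-φ'2) 0 hPc hwc
  rw [show θ'2+(θ2-θ'2) = θ2 by ring, show φ'2+(φ2-φ'2) = φ2 by ring] at k2
  norm_num at k2
  rw [← inner_M θ2 φ2 Pm w, ← inner_M θ'2 φ'2 Pm w, ← inner_Mθ θ'2 φ'2 Pm w,
    ← inner_Mφ θ'2 φ'2 Pm w] at k2
  -- abbreviations
  set f1 := ⟪act (R α) (act (M θ1 φ1) S), w⟫ with hf1
  set f0 := ⟪act (R α') (act (M θ'1 φ'1) S), w⟫ with hf0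
  set Tθ := ⟪act (R α') (act (Mθ θ'1 φ'1) S), w⟫ with hTθ
  set Tφ := ⟪act (R α') (act (Mφ θ'1 φ'1) S), w⟫ with hTφ
  set Tα := ⟪act (R' α') (act (M θ'1 φ'1) S), w⟫ with hTα
  set g1 := ⟪act (M θ2 φ2) Pm, w⟫ with hg1
  set g0 := ⟪act (M θ'2 φ'2) Pm, w⟫ with hg0
  set Uθ := ⟪act (Mθ θ'2 φ'2) Pm, w⟫ with hUθ
  set Uφ := ⟪act (Mφ θ'2 φ'2) Pm, w⟫ with hUφ
  -- remainder bounds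
  have hr1 : (|θ1-θ'1|+|φ1-φ'1|+|α-α'|)^2/2 ≤ 9*ε^2/2 := by
    nlinarith [abs_nonneg (θ1-θ'1), abs_nonneg (φ1-φ'1), abs_nonneg (α-α'), hθ1, hφ1, hα]
  have hr2 : (|θ2-θ'2|+|φ2-φ'2|)^2/2 ≤ 2*ε^2 := by
    nlinarith [abs_nonneg (θ2-θ'2), abs_nonneg (φ2-φ'2), hθ2, hφ2]
  -- linear term bounds
  have hL1 : |(θ1-θ'1)*Tθ + (φ1-φ'1)*Tφ + (α-α')*Tα| ≤ ε*(|Tα| + |Tθ| + |Tφ|) := by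
    have b1 : |(θ1-θ'1)*Tθ| ≤ ε*|Tθ| := by
      rw [abs_mul]; exact mul_le_mul_of_nonneg_right hθ1 (abs_nonneg _)
    have b2 : |(φ1-φ'1)*Tφ| ≤ ε*|Tφ| := by
      rw [abs_mul]; exact mul_le_mul_of_nonneg_right hφ1 (abs_nonneg _)
    have b3 : |(α-α')*Tα| ≤ ε*|Tα| := by
      rw [abs_mul]; exact mul_le_mul_of_nonneg_right hα (abs_nonneg _)
    have c1 := abs_add_le ((θ1-θ'1)*Tθ + (φ1-φ'1)*Tφ) ((α-α')*Tα)
    have c2 := abs_add_le ((θ1-θ'1)*Tθ) ((φ1-φ'1)*Tφ)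
    nlinarith [c1, c2, b1, b2, b3]
  have hL2 : |(θ2-θ'2)*Uθ + (φ2-φ'2)*Uφ| ≤ ε*(|Uθ| + |Uφ|) := by
    have b1 : |(θ2-θ'2)*Uθ| ≤ ε*|Uθ| := by
      rw [abs_mul]; exact mul_le_mul_of_nonneg_right hθ2 (abs_nonneg _)
    have b2 : |(φ2-φ'2)*Uφ| ≤ ε*|Uφ| := by
      rw [abs_mul]; exact mul_le_mul_of_nonneg_right hφ2 (abs_nonneg _)
    have c1 := abs_add_le ((θ2-θ'2)*Uθ) ((φ2-φ'2)*Uφ)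
    nlinarith [c1, b1, b2]
  have m1 := abs_le.mp k1
  have m2 := abs_le.mp k2
  have n1 := neg_abs_le ((θ1-θ'1)*Tθ + (φ1-φ'1)*Tφ + (α-α')*Tα)
  have n2 := le_abs_self ((θ2-θ'2)*Uθ + (φ2-φ'2)*Uφ)
  linarith [m1.1, m1.2, m2.1, m2.2, hr1, hr2, hL1, hL2, n1, n2, hQw, hcert]
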